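/- Let G be a pan-free graph, C a hole in G of length at least five, and x a vertex outside C with at least five neighbors on C. Then x is adjacent to every vertex of C. -/

import Mathlib

def IsHole {V : Type*} (G : SimpleGraph V) (n : ℕ) (f : ZMod n → V) : Prop :=
  4 ≤ n ∧ Function.Injective f ∧
    ∀ i j : ZMod n, G.Adj (f i) (f j) ↔ (j = i + 1 ∨ i = j + 1)

def HasInducedPan {V : Type*} (G : SimpleGraph V) : Prop :=
  ∃ (n : ℕ) (f : ZMod n → V) (x : V),
    IsHole G n f ∧ x ∉ Set.range f ∧ ∃! i : ZMod n, G.Adj x (f i)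

def HasEvenHole {V : Type*} (G : SimpleGraph V) : Prop :=
  ∃ (n : ℕ) (f : ZMod n → V), IsHole G n f ∧ Even n

theorem stmt_3 {V : Type*} (G : SimpleGraph V) (hpan : ¬ HasInducedPan G)
    (ℓ : ℕ) (f : ZMod ℓ → V) (hC : IsHole G ℓ f) (hℓ : 5 ≤ ℓ)
    (x : V) (hx : x ∉ Set.range f)
    (h5 : 5 ≤ ({j : ZMod ℓ | G.Adj x (f j)}).ncard) :
    ∀ j : ZMod ℓ, G.Adj x (f j) := by
  classical
  by_contra hcon
  push_neg at hcon
  obtain ⟨j₀, hj₀⟩ := hcon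
  haveI : NeZero ℓ := ⟨by omega⟩
  obtain ⟨h4, hinj, hadj⟩ := hC
  set N := {j : ZMod ℓ | G.Adj x (f j)} with hN
  have hNne : N.Nonempty := by
    apply Set.nonempty_of_ncard_ne_zero; omega
  obtain ⟨n₀, hn₀⟩ := hNne
  have hn₀j : n₀ ≠ j₀ := by rintro rfl; exact hj₀ hn₀
  -- existence of a neighbor in the negative direction
  have hex1 : ∃ u : ℕ, G.Adj x (f (j₀ - ((u + 1 : ℕ) : ZMod ℓ))) := by
    refine ⟨(j₀ - n₀).val - 1, ?_⟩
    have hv : (j₀ - n₀).val ≠ 0 := by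
      intro h
      have h2 : j₀ - n₀ = 0 := by
        have := ZMod.natCast_rightInverse (n := ℓ) (j₀ - n₀)
        rw [h] at this; simpa using this.symm
      have : j₀ = n₀ := by linear_combination h2
      exact hn₀j this.symm
    have heq : (((j₀ - n₀).val - 1 + 1 : ℕ) : ZMod ℓ) = j₀ - n₀ := by
      rw [Nat.sub_add_cancel (by omega)]
      exact ZMod.natCast_rightInverse _
    rw [heq]
    have hn₀' : G.Adj x (f n₀) := hn₀
    simpa using hn₀'
  -- existence in positive direction
  have hex2 : ∃ u : ℕ, G.Adj x (f (j₀ + ((u + 1 : ℕ) : ZMod ℓ))) := by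
    refine ⟨(n₀ - j₀).val - 1, ?_⟩
    have hv : (n₀ - j₀).val ≠ 0 := by
      intro h
      have h2 : n₀ - j₀ = 0 := by
        have := ZMod.natCast_rightInverse (n := ℓ) (n₀ - j₀)
        rw [h] at this; simpa using this.symm
      have : n₀ = j₀ := by linear_combination h2
      exact hn₀j this
    have heq : (((n₀ - j₀).val - 1 + 1 : ℕ) : ZMod ℓ) = n₀ - j₀ := by
      rw [Nat.sub_add_cancel (by omega)]
      exact ZMod.natCast_rightInverse _
    rw [heq]
    have heq2 : j₀ + (n₀ - j₀) = n₀ := by ring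
    rw [heq2]; exact hn₀
  set s : ℕ := Nat.find hex1 + 1 with hs_def
  set t : ℕ := Nat.find hex2 + 1 with ht_def
  have hs1 : 1 ≤ s := by omega
  have ht1 : 1 ≤ t := by omega
  have hs_adj : G.Adj x (f (j₀ - (s : ZMod ℓ))) := Nat.find_spec hex1
  have ht_adj : G.Adj x (f (j₀ + (t : ZMod ℓ))) := Nat.find_spec hex2
  have hs_min : ∀ u : ℕ, u < s → ¬ G.Adj x (f (j₀ - (u : ZMod ℓ))) := by
    intro u hu
    rcases Nat.eq_zero_or_pos u with h0 | h0
    · subst h0; simpa using hj₀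
    · have h1 : u - 1 < Nat.find hex1 := by omega
      have h2 := Nat.find_min hex1 h1
      have heq : ((u - 1 + 1 : ℕ) : ZMod ℓ) = (u : ZMod ℓ) := by
        rw [Nat.sub_add_cancel h0]
      rwa [heq] at h2
  have ht_min : ∀ u : ℕ, u < t → ¬ G.Adj x (f (j₀ + (u : ZMod ℓ))) := by
    intro u hu
    rcases Nat.eq_zero_or_pos u with h0 | h0
    · subst h0; simpa using hj₀
    · have h1 : u - 1 < Nat.find hex2 := by omega
      have h2 := Nat.find_min hex2 h1
      have heq : ((u - 1 + 1 : ℕ) : ZMod ℓ) = (u : ZMod ℓ) := by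
        rw [Nat.sub_add_cancel h0]
      rwa [heq] at h2
  -- counting: N is contained in the image of Icc t (ℓ - s)
  have hsub : N ⊆ ↑((Finset.Icc t (ℓ - s)).image (fun v : ℕ => j₀ + (v : ZMod ℓ))) := by
    intro j hj
    have hjv : j = j₀ + ((j - j₀).val : ZMod ℓ) := by
      rw [ZMod.natCast_rightInverse]; ring
    set v : ℕ := (j - j₀).val with hv_def
    have hvlt : v < ℓ := ZMod.val_lt _
    have hvt : t ≤ v := by
      by_contra hvt
      push_neg at hvt
      exact ht_min v hvt (by rw [← hjv]; exact hj)
    have hvs : v ≤ ℓ - s := by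
      by_contra hvs
      push_neg at hvs
      have hls : ℓ - v < s := by omega
      have hneg : j₀ + (v : ZMod ℓ) = j₀ - ((ℓ - v : ℕ) : ZMod ℓ) := by
        have h0 : ((v : ℕ) : ZMod ℓ) + ((ℓ - v : ℕ) : ZMod ℓ) = 0 := by
          rw [← Nat.cast_add]
          have : v + (ℓ - v) = ℓ := by omega
          rw [this]; exact ZMod.natCast_self ℓ
        linear_combination h0
      exact hs_min (ℓ - v) hls (by rw [← hneg, ← hjv]; exact hj)
    simp only [Finset.coe_image, Set.mem_image, Finset.mem_coe, Finset.mem_Icc]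
    exact ⟨v, ⟨hvt, hvs⟩, hjv.symm⟩
  have hcount : N.ncard ≤ ℓ - s + 1 - t := by
    calc N.ncard ≤ ((Finset.Icc t (ℓ - s)).image (fun v : ℕ => j₀ + (v : ZMod ℓ))).card := by
          rw [← Set.ncard_coe_finset]
          exact Set.ncard_le_ncard hsub (Set.toFinite _)
      _ ≤ (Finset.Icc t (ℓ - s)).card := Finset.card_image_le
      _ = ℓ - s + 1 - t := by rw [Nat.card_Icc]
  have hstl : s + t ≤ ℓ - 4 := by omega
  set d : ℕ := s + t with hd_def
  set p : ZMod ℓ := j₀ - (s : ZMod ℓ) with hp_def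
  have hd2 : 2 ≤ d := by omega
  have hdl : d ≤ ℓ - 4 := hstl
  have hdlt : d + 2 < ℓ := by omega
  -- endpoint adjacency
  have hA0 : G.Adj x (f (p + ((0 : ℕ) : ZMod ℓ))) := by
    have e : p + ((0 : ℕ) : ZMod ℓ) = p := by push_cast; ring
    rw [e]; exact hs_adj
  have hAd : G.Adj x (f (p + ((d : ℕ) : ZMod ℓ))) := by
    have e : p + ((d : ℕ) : ZMod ℓ) = j₀ + (t : ZMod ℓ) := by
      rw [hp_def, hd_def]; push_cast; ring
    rw [e]; exact ht_adj
  -- interior non-adjacency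
  have hB : ∀ u : ℕ, 1 ≤ u → u ≤ d - 1 → ¬ G.Adj x (f (p + (u : ZMod ℓ))) := by
    intro u h1 h2
    rcases lt_trichotomy u s with hlt | heq | hgt
    · have heq : p + (u : ZMod ℓ) = j₀ - ((s - u : ℕ) : ZMod ℓ) := by
        rw [hp_def]
        have e : ((s - u : ℕ) : ZMod ℓ) = (s : ZMod ℓ) - (u : ZMod ℓ) := by
          push_cast [Nat.cast_sub (le_of_lt hlt)]; ring
        rw [e]; ring
      rw [heq]
      exact hs_min (s - u) (by omega)
    · have heq2 : p + (u : ZMod ℓ) = j₀ := by rw [hp_def, heq]; ring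
      rw [heq2]; exact hj₀
    · have heq : p + (u : ZMod ℓ) = j₀ + ((u - s : ℕ) : ZMod ℓ) := by
        rw [hp_def]
        have e : ((u - s : ℕ) : ZMod ℓ) = (u : ZMod ℓ) - (s : ZMod ℓ) := by
          push_cast [Nat.cast_sub (le_of_lt hgt)]; ring
        rw [e]; ring
      rw [heq]
      exact ht_min (u - s) (by omega)
  -- characterization of x's adjacency on the arc
  have hxarc : ∀ a : ℕ, a ≤ d → (G.Adj x (f (p + (a : ZMod ℓ))) ↔ (a = 0 ∨ a = d)) := by
    intro a ha
    constructor
    · intro h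
      by_contra hc
      push_neg at hc
      exact hB a (by omega) (by omega) h
    · rintro (rfl | rfl)
      · exact hA0
      · exact hAd
  -- natural casts below ℓ are injective
  have hcinj : ∀ a b : ℕ, a < ℓ → b < ℓ → ((a : ZMod ℓ) = (b : ZMod ℓ) ↔ a = b) := by
    intro a b ha hb
    constructor
    · intro h
      have := congrArg ZMod.val h
      rwa [ZMod.val_cast_of_lt ha, ZMod.val_cast_of_lt hb] at this
    · rintro rfl; rfl
  -- find the pan vertex r
  have hB4 : ∃ r ∈ N, r ∉ ({p - 1, p, p + (d : ZMod ℓ), p + (d : ZMod ℓ) + 1} : Finset (ZMod ℓ)) := by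
    by_contra hc
    push_neg at hc
    have hsub2 : N ⊆ ↑({p - 1, p, p + (d : ZMod ℓ), p + (d : ZMod ℓ) + 1} : Finset (ZMod ℓ)) := hc
    have h1 : N.ncard ≤ ({p - 1, p, p + (d : ZMod ℓ), p + (d : ZMod ℓ) + 1} : Finset (ZMod ℓ)).card := by
      rw [← Set.ncard_coe_finset]
      exact Set.ncard_le_ncard hsub2 (Set.toFinite _)
    have a1 := Finset.card_insert_le (p - 1) ({p, p + (d : ZMod ℓ), p + (d : ZMod ℓ) + 1} : Finset (ZMod ℓ))
    have a2 := Finset.card_insert_le p ({p + (d : ZMod ℓ), p + (d : ZMod ℓ) + 1} : Finset (ZMod ℓ))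
    have a3 := Finset.card_insert_le (p + (d : ZMod ℓ)) ({p + (d : ZMod ℓ) + 1} : Finset (ZMod ℓ))
    have a4 : ({p + (d : ZMod ℓ) + 1} : Finset (ZMod ℓ)).card = 1 := Finset.card_singleton _
    omega
  obtain ⟨r, hrN, hrB⟩ := hB4
  simp only [Finset.mem_insert, Finset.mem_singleton, not_or] at hrB
  obtain ⟨hr1, hr2, hr3, hr4⟩ := hrB
  have hrx : G.Adj x (f r) := hrN
  -- r is not on the arc
  have hr_arc : ∀ u : ℕ, u ≤ d → r ≠ p + (u : ZMod ℓ) := by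
    intro u hu hre
    rcases Nat.eq_zero_or_pos u with h0 | h0
    · subst h0; simp at hre; exact hr2 hre
    rcases eq_or_lt_of_le hu with hud | hud
    · subst hud; exact hr3 hre
    · exact hB u h0 (by omega) (by rw [← hre]; exact hrx)
  -- the new hole
  haveI hm : NeZero (d + 2) := ⟨by omega⟩
  set g : ZMod (d + 2) → V := fun i => if i.val ≤ d then f (p + ((i.val : ℕ) : ZMod ℓ)) else x
    with hg_def
  have hgval : ∀ i : ZMod (d + 2), i.val < d + 2 := fun i => ZMod.val_lt i
  have hg_le : ∀ i : ZMod (d + 2), i.val ≤ d → g i = f (p + ((i.val : ℕ) : ZMod ℓ)) := by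
    intro i h; simp [hg_def, h]
  have hg_gt : ∀ i : ZMod (d + 2), ¬ (i.val ≤ d) → g i = x := by
    intro i h; simp [hg_def, h]
  have emod : (d + 1 + 1) % (d + 2) = 0 := by
    rw [show d + 1 + 1 = d + 2 from by omega]; exact Nat.mod_self _
  -- arc adjacency in terms of naturals
  have hadjf : ∀ a b : ℕ, a ≤ d + 1 → b ≤ d + 1 →
      (G.Adj (f (p + (a : ZMod ℓ))) (f (p + (b : ZMod ℓ))) ↔ (b = a + 1 ∨ a = b + 1)) := by
    intro a b ha hb
    rw [hadj]
    constructor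
    · rintro (h | h)
      · left
        have e : ((b : ℕ) : ZMod ℓ) = ((a + 1 : ℕ) : ZMod ℓ) := by
          push_cast
          linear_combination h
        exact (hcinj b (a + 1) (by omega) (by omega)).mp e
      · right
        have e : ((a : ℕ) : ZMod ℓ) = ((b + 1 : ℕ) : ZMod ℓ) := by
          push_cast
          linear_combination h
        exact (hcinj a (b + 1) (by omega) (by omega)).mp e
    · rintro (rfl | rfl)
      · left; push_cast; ring
      · right; push_cast; ring
  -- successor characterization in ZMod (d+2)
  have hsucc : ∀ u w : ZMod (d + 2), (w = u + 1) ↔ w.val = (u.val + 1) % (d + 2) := by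
    intro u w
    have hval1 : (u + 1).val = (u.val + 1) % (d + 2) := by
      rw [ZMod.val_add, ZMod.val_one_eq_one_mod,
        Nat.mod_eq_of_lt (show 1 < d + 2 by omega)]
    constructor
    · rintro rfl; exact hval1
    · intro h
      apply ZMod.val_injective
      rw [h, hval1]
  have hole : IsHole G (d + 2) g := by
    refine ⟨by omega, ?_, ?_⟩
    · intro i j hij
      by_cases hic : i.val ≤ d <;> by_cases hjc : j.val ≤ d
      · rw [hg_le i hic, hg_le j hjc] at hij
        have h1 := hinj hij
        have heq : ((i.val : ℕ) : ZMod ℓ) = ((j.val : ℕ) : ZMod ℓ) := by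
          linear_combination h1
        have h2 := (hcinj i.val j.val (by omega) (by omega)).mp heq
        exact ZMod.val_injective _ h2
      · rw [hg_le i hic, hg_gt j hjc] at hij
        exact absurd ⟨_, hij⟩ hx
      · rw [hg_gt i hic, hg_le j hjc] at hij
        exact absurd ⟨_, hij.symm⟩ hx
      · apply ZMod.val_injective
        have hi := hgval i; have hj := hgval j
        omega
    · intro i j
      have hi := hgval i
      have hj := hgval j
      rw [hsucc i j, hsucc j i]
      by_cases hic : i.val ≤ d <;> by_cases hjc : j.val ≤ d
      · rw [hg_le i hic, hg_le j hjc, hadjf i.val j.val (by omega) (by omega),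
          Nat.mod_eq_of_lt (show i.val + 1 < d + 2 by omega),
          Nat.mod_eq_of_lt (show j.val + 1 < d + 2 by omega)]
      · -- i on arc, j = x
        have hjv : j.val = d + 1 := by omega
        rw [hg_le i hic, hg_gt j hjc, G.adj_comm, hxarc i.val hic, hjv, emod,
          Nat.mod_eq_of_lt (show i.val + 1 < d + 2 by omega)]
        omega
      · have hiv : i.val = d + 1 := by omega
        rw [hg_gt i hic, hg_le j hjc, hxarc j.val hjc, hiv, emod,
          Nat.mod_eq_of_lt (show j.val + 1 < d + 2 by omega)]
        omega
      · have hiv : i.val = d + 1 := by omega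
        have hjv : j.val = d + 1 := by omega
        rw [hg_gt i hic, hg_gt j hjc]
        constructor
        · intro h; exact absurd h (G.irrefl)
        · rw [hiv, hjv, emod]
          omega
  -- f r is not on the new hole
  have hrrange : f r ∉ Set.range g := by
    rintro ⟨i, hi⟩
    by_cases hic : i.val ≤ d
    · rw [hg_le i hic] at hi
      exact hr_arc i.val hic (hinj hi).symm
    · rw [hg_gt i hic] at hi
      exact hx ⟨r, hi.symm⟩
  -- f r has a unique neighbour on the new hole
  have huniq : ∃! i : ZMod (d + 2), G.Adj (f r) (g i) := by
    have hival : ((d + 1 : ℕ) : ZMod (d + 2)).val = d + 1 := ZMod.val_cast_of_lt (by omega)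
    refine ⟨((d + 1 : ℕ) : ZMod (d + 2)), ?_, ?_⟩
    · show G.Adj (f r) (g ((d + 1 : ℕ) : ZMod (d + 2)))
      rw [hg_gt _ (by rw [hival]; omega)]
      exact hrx.symm
    · intro i hi
      by_cases hic : i.val ≤ d
      · exfalso
        rw [hg_le i hic] at hi
        rw [hadj] at hi
        rcases hi with h | h
        · -- p + i.val = r + 1, so r = p + (i.val - 1)
          rcases Nat.eq_zero_or_pos i.val with h0 | h0
          · apply hr1
            rw [h0] at h
            simp at h
            linear_combination -h
          · apply hr_arc (i.val - 1) (by omega)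
            have e : ((i.val - 1 : ℕ) : ZMod ℓ) = ((i.val : ℕ) : ZMod ℓ) - 1 := by
              push_cast [Nat.cast_sub h0]; ring
            rw [e]
            linear_combination -h
        · -- r = p + i.val + 1
          rcases eq_or_lt_of_le hic with hd' | hd'
          · apply hr4
            rw [hd'] at h
            exact h
          · apply hr_arc (i.val + 1) (by omega)
            rw [h]; push_cast; ring
      · apply ZMod.val_injective
        rw [hival]
        have := hgval i
        omega
  exact hpan ⟨d + 2, g, f r, hole, hrrange, huniq⟩
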